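/- Let n ∈ (3/2, 3), θ > 0 and C₅ > 0, and let f : [0,1) → (0,∞) be continuous with f(x)·(1−x)^(−3/n) → C₅ as x → 1⁻. Then there exists no function g : [0,1] → ℝ that is continuously differentiable on [0,1], three times continuously differentiable on (0,1), and satisfies (n−1)·x·g(x) + f(x)^n · g'''(x) = 0 for all x ∈ (0,1), g(1) = 0, g'(1) = −θ, and g'(0) = 0. -/

import Mathlib

/-- Nonexistence of the first-order correction for weak contact-line friction when
`n ∈ (3/2, 3)`: if `f > 0` is continuous on `[0,1)` with `f(x)(1−x)^{−3/n} → C₅ > 0` as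
`x → 1⁻`, then there is no `g`, continuously differentiable on `[0,1]` and three times
continuously differentiable on `(0,1)`, with `(n−1)·x·g + fⁿ·g''' = 0` on `(0,1)`,
`g(1) = 0`, `g'(1) = −θ`, and `g'(0) = 0`. -/
theorem no_correction_profile_large_n
    (n : ℝ) (hn : n ∈ Set.Ioo (3 / 2 : ℝ) 3) (θ : ℝ) (hθ : 0 < θ)
    (C₅ : ℝ) (hC₅ : 0 < C₅)
    (f : ℝ → ℝ) (hfc : ContinuousOn f (Set.Ico 0 1))
    (hfpos : ∀ x ∈ Set.Ico (0:ℝ) 1, 0 < f x)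
    (hfasym : Filter.Tendsto (fun x => f x * (1 - x) ^ (-(3 / n)))
      (nhdsWithin 1 (Set.Iio 1)) (nhds C₅)) :
    ¬ ∃ g : ℝ → ℝ,
      ContDiffOn ℝ 1 g (Set.Icc 0 1) ∧
      ContDiffOn ℝ 3 g (Set.Ioo 0 1) ∧
      (∀ x ∈ Set.Ioo (0:ℝ) 1,
        (n - 1) * x * g x + f x ^ n * deriv (deriv (deriv g)) x = 0) ∧
      g 1 = 0 ∧
      derivWithin g (Set.Icc 0 1) 1 = -θ ∧
      derivWithin g (Set.Icc 0 1) 0 = 0 := by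
  rintro ⟨g, hg1, hg3, heq, hgval, hgd1, hgd0⟩
  have hn1 : (1:ℝ) < n := by linarith [hn.1]
  have hn0 : n ≠ 0 := by positivity
  set g1 := derivWithin g (Set.Icc 0 1) with hg1def
  set d1 := deriv g with hd1def
  set d2 := deriv (deriv g) with hd2def
  set d3 := deriv (deriv (deriv g)) with hd3def
  -- continuity of the boundary derivative
  have hcg1 : ContinuousOn g1 (Set.Icc 0 1) :=
    hg1.continuousOn_derivWithin (uniqueDiffOn_Icc one_pos) le_rfl
  have hEq1 : ∀ x ∈ Set.Ioo (0:ℝ) 1, g1 x = d1 x := fun x hx =>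
    derivWithin_of_mem_nhds (Icc_mem_nhds hx.1 hx.2)
  have hd1at : ∀ x ∈ Set.Ioo (0:ℝ) 1, HasDerivAt g (d1 x) x := fun x hx =>
    ((hg3.differentiableOn (by norm_num)).differentiableAt (isOpen_Ioo.mem_nhds hx)).hasDerivAt
  have hcd1 : ContDiffOn ℝ 2 d1 (Set.Ioo (0:ℝ) 1) := hg3.deriv_of_isOpen isOpen_Ioo (by norm_num)
  have hd2at : ∀ x ∈ Set.Ioo (0:ℝ) 1, HasDerivAt d1 (d2 x) x := fun x hx =>
    ((hcd1.differentiableOn (by norm_num)).differentiableAt (isOpen_Ioo.mem_nhds hx)).hasDerivAt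
  have hcd2 : ContDiffOn ℝ 1 d2 (Set.Ioo (0:ℝ) 1) := hcd1.deriv_of_isOpen isOpen_Ioo (by norm_num)
  have hd3at : ∀ x ∈ Set.Ioo (0:ℝ) 1, HasDerivAt d2 (d3 x) x := fun x hx =>
    ((hcd2.differentiableOn (by norm_num)).differentiableAt (isOpen_Ioo.mem_nhds hx)).hasDerivAt
  have hcd3 : ContinuousOn d3 (Set.Ioo (0:ℝ) 1) :=
    hcd2.continuousOn_deriv_of_isOpen isOpen_Ioo (by norm_num)
  -- solving the ODE for d3
  have hode : ∀ x ∈ Set.Ioo (0:ℝ) 1, d3 x = -((n - 1) * x * g x) / f x ^ n := by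
    intro x hx
    have hfx : (0:ℝ) < f x ^ n := Real.rpow_pos_of_pos (hfpos x ⟨hx.1.le, hx.2⟩) n
    have := heq x hx
    field_simp
    linarith
  -- choose x₀ near 1
  have hg1cont1 : Filter.Tendsto g1 (nhdsWithin 1 (Set.Icc 0 1)) (nhds (-θ)) := by
    have := hcg1 1 (by norm_num : (1:ℝ) ∈ Set.Icc 0 1)
    rwa [ContinuousWithinAt, hgd1] at this
  have hev1 : ∀ᶠ x in nhdsWithin 1 (Set.Icc 0 1), g1 x < -θ/2 :=
    hg1cont1.eventually_lt_const (by linarith)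
  have hev2 : ∀ᶠ x in nhdsWithin 1 (Set.Iio 1), f x * (1 - x) ^ (-(3 / n)) < 2 * C₅ :=
    hfasym.eventually_lt_const (by linarith)
  obtain ⟨δ₂, hδ₂, hball2⟩ := Metric.mem_nhdsWithin_iff.mp hev1
  obtain ⟨δ₁, hδ₁, hball1⟩ := Metric.mem_nhdsWithin_iff.mp hev2
  set x₀ := max (1/2 : ℝ) (max (1 - δ₁/2) (1 - δ₂/2)) with hx₀def
  have hx₀lt1 : x₀ < 1 := by
    apply max_lt (by norm_num)
    exact max_lt (by linarith) (by linarith)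
  have hx₀half : (1/2 : ℝ) ≤ x₀ := le_max_left _ _
  have hx₀pos : (0:ℝ) < x₀ := by linarith
  -- g1 ≤ -θ/2 on [x₀, 1]
  have P1 : ∀ x ∈ Set.Icc x₀ 1, g1 x ≤ -θ/2 := by
    intro x hx
    have hx1 : x ∈ Set.Icc (0:ℝ) 1 := ⟨by linarith [hx.1], hx.2⟩
    have hxb : x ∈ Metric.ball (1:ℝ) δ₂ := by
      have h1 : 1 - δ₂/2 ≤ x₀ := le_trans (le_max_right _ _) (le_max_right _ _)
      simp only [Metric.mem_ball, Real.dist_eq]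
      rw [abs_sub_lt_iff]
      constructor <;> [linarith [hx.1, hx.2]; linarith [hx.1, hx.2]]
    exact (hball2 ⟨hxb, hx1⟩).le
  -- f bound on [x₀, 1)
  have P2 : ∀ x ∈ Set.Ico x₀ 1, f x * (1 - x) ^ (-(3 / n)) ≤ 2 * C₅ := by
    intro x hx
    have hxb : x ∈ Metric.ball (1:ℝ) δ₁ := by
      have h1 : 1 - δ₁/2 ≤ x₀ := le_trans (le_max_left _ _) (le_max_right _ _)
      simp only [Metric.mem_ball, Real.dist_eq]
      rw [abs_sub_lt_iff]
      constructor <;> [linarith [hx.1, hx.2]; linarith [hx.1, hx.2]]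
    exact (hball1 ⟨hxb, hx.2⟩).le
  -- lower bound on g
  have hglow : ∀ x ∈ Set.Ico x₀ 1, (θ/2) * (1 - x) ≤ g x := by
    intro x hx
    have hx01 : x ∈ Set.Icc (0:ℝ) 1 := ⟨by linarith [hx.1], hx.2.le⟩
    have hsub : Set.Icc x 1 ⊆ Set.Icc (0:ℝ) 1 := Set.Icc_subset_Icc hx01.1 le_rfl
    have hftc : ∫ t in x..1, g1 t = g 1 - g x := by
      apply intervalIntegral.integral_eq_sub_of_hasDeriv_right_of_le hx.2.le
        (hg1.continuousOn.mono hsub)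
      · intro t ht
        have ht' : t ∈ Set.Ioo (0:ℝ) 1 := ⟨by linarith [ht.1, hx.1], ht.2⟩
        rw [hEq1 t ht']
        exact (hd1at t ht').hasDerivWithinAt
      · exact (hcg1.mono hsub).intervalIntegrable_of_Icc hx.2.le
    have hmono : ∫ t in x..1, g1 t ≤ ∫ t in x..1, (-θ/2 : ℝ) := by
      apply intervalIntegral.integral_mono_on hx.2.le
        ((hcg1.mono hsub).intervalIntegrable_of_Icc hx.2.le)
        (intervalIntegrable_const)
      intro t ht
      have : g1 t ≤ -θ/2 := P1 t ⟨le_trans hx.1 ht.1, ht.2⟩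
      linarith
    rw [hftc, hgval] at hmono
    rw [intervalIntegral.integral_const] at hmono
    simp only [smul_eq_mul] at hmono
    nlinarith
  -- upper bound for f^n
  have hfb : ∀ x ∈ Set.Ico x₀ 1, f x ^ n ≤ (2*C₅) ^ n * (1 - x) ^ (3:ℝ) := by
    intro x hx
    have hu : (0:ℝ) < 1 - x := by linarith [hx.2]
    have hup : (0:ℝ) < (1 - x) ^ (3/n) := Real.rpow_pos_of_pos hu _
    have hfx : 0 < f x := hfpos x ⟨by linarith [hx.1], hx.2⟩
    have h1 : f x ≤ 2 * C₅ * (1 - x) ^ (3/n) := by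
      have h2 := P2 x hx
      rw [Real.rpow_neg hu.le] at h2
      have h3 := mul_le_mul_of_nonneg_right h2 hup.le
      rwa [mul_assoc, inv_mul_cancel₀ (ne_of_gt hup), mul_one] at h3
    have h4 : f x ^ n ≤ (2 * C₅ * (1 - x) ^ (3/n)) ^ n :=
      Real.rpow_le_rpow hfx.le h1 (by linarith)
    have h5 : (2 * C₅ * (1 - x) ^ (3/n)) ^ n = (2*C₅) ^ n * (1 - x) ^ (3:ℝ) := by
      rw [Real.mul_rpow (by linarith) hup.le, ← Real.rpow_mul hu.le,
        div_mul_cancel₀ (3:ℝ) hn0]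
    linarith
  -- pointwise bound on d3
  set K := (n - 1) * x₀ * (θ/2) / ((2*C₅) ^ n) with hKdef
  have h2C : (0:ℝ) < (2*C₅) ^ n := Real.rpow_pos_of_pos (by linarith) n
  have hK : 0 < K := by
    apply div_pos _ h2C
    have : (0:ℝ) < n - 1 := by linarith
    positivity
  have hd3b : ∀ x ∈ Set.Ioo x₀ 1, d3 x ≤ -(K / (1 - x)^2) := by
    intro x hx
    have hx01 : x ∈ Set.Ioo (0:ℝ) 1 := ⟨by linarith [hx.1], hx.2⟩
    have hu : (0:ℝ) < 1 - x := by linarith [hx.2]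
    have hfx : (0:ℝ) < f x ^ n := Real.rpow_pos_of_pos (hfpos x ⟨hx01.1.le, hx.2⟩) n
    have hgx : (θ/2) * (1 - x) ≤ g x := hglow x ⟨hx.1.le, hx.2⟩
    have hNum : (n - 1) * x₀ * (θ/2) * (1 - x) ≤ (n - 1) * x * g x := by
      have h1 : (0:ℝ) < n - 1 := by linarith
      have h2 : (0:ℝ) ≤ (θ/2) * (1 - x) := by positivity
      calc (n - 1) * x₀ * (θ/2) * (1 - x) = ((n - 1) * x₀) * ((θ/2) * (1 - x)) := by ring
        _ ≤ ((n - 1) * x) * ((θ/2) * (1 - x)) :=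
            mul_le_mul_of_nonneg_right (mul_le_mul_of_nonneg_left hx.1.le h1.le) h2
        _ ≤ ((n - 1) * x) * g x :=
            mul_le_mul_of_nonneg_left hgx (by nlinarith [hx01.1.le])
        _ = (n - 1) * x * g x := by ring
    have hdiv : ((n - 1) * x₀ * (θ/2) * (1 - x)) / ((2*C₅) ^ n * (1 - x) ^ (3:ℝ)) ≤
        ((n - 1) * x * g x) / (f x ^ n) := by
      apply div_le_div₀ _ hNum hfx (hfb x ⟨hx.1.le, hx.2⟩)
      have h1 : (0:ℝ) < n - 1 := by linarith
      have hgx0 : (0:ℝ) ≤ g x := le_trans (by positivity) hgx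
      exact mul_nonneg (mul_nonneg h1.le hx01.1.le) hgx0
    have hre : ((n - 1) * x₀ * (θ/2) * (1 - x)) / ((2*C₅) ^ n * (1 - x) ^ (3:ℝ)) =
        K / (1 - x)^2 := by
      have h3 : (1 - x) ^ (3:ℝ) = (1 - x)^(3:ℕ) := by
        rw [← Real.rpow_natCast (1-x) 3]; norm_num
      rw [h3, hKdef]
      field_simp
    rw [hre] at hdiv
    rw [hode x hx01, neg_div]
    exact neg_le_neg hdiv
  -- fix a
  set a := (x₀ + 1) / 2 with hadef
  have ha : a ∈ Set.Ioo x₀ 1 := ⟨by simp only [hadef]; linarith, by simp only [hadef]; linarith⟩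
  have ha01 : a ∈ Set.Ioo (0:ℝ) 1 := ⟨by linarith [ha.1], ha.2⟩
  have hua : (0:ℝ) < 1 - a := by linarith [ha.2]
  -- second derivative bound
  have hd2b : ∀ b ∈ Set.Ioo a 1, d2 b ≤ d2 a + (K / (1 - a) - K / (1 - b)) := by
    intro b hb
    have hab : a ≤ b := hb.1.le
    have hsub : Set.Icc a b ⊆ Set.Ioo x₀ 1 := fun t ht =>
      ⟨lt_of_lt_of_le ha.1 ht.1, lt_of_le_of_lt ht.2 hb.2⟩
    have hsub01 : Set.Icc a b ⊆ Set.Ioo (0:ℝ) 1 := fun t ht =>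
      ⟨by linarith [(hsub ht).1], (hsub ht).2⟩
    have hftc : ∫ t in a..b, d3 t = d2 b - d2 a := by
      apply intervalIntegral.integral_eq_sub_of_hasDerivAt
      · intro t ht
        rw [Set.uIcc_of_le hab] at ht
        exact hd3at t (hsub01 ht)
      · exact (hcd3.mono hsub01).intervalIntegrable_of_Icc hab
    have hftc2 : ∫ t in a..b, -(K / (1 - t)^2) =
        -(K * (1 - b)⁻¹) - -(K * (1 - a)⁻¹) := by
      apply intervalIntegral.integral_eq_sub_of_hasDerivAt
      · intro t ht
        rw [Set.uIcc_of_le hab] at ht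
        have hne : (1:ℝ) - t ≠ 0 := by
          have := (hsub ht).2; intro hc; linarith [hc]
        have h1 : HasDerivAt (fun t : ℝ => 1 - t) (-1) t := (hasDerivAt_id t).const_sub 1
        have h2 := ((h1.inv hne).const_mul K).neg
        convert h2 using 1
        field_simp
        show -(K / (1 - t) ^ 2) = -(K * (- -1 / (1 - t) ^ 2))
        ring
        funext y
        show -(K / (1 - y)) = -(K * (1 - y)⁻¹)
        rw [div_eq_mul_inv]
      · apply ContinuousOn.intervalIntegrable
        rw [Set.uIcc_of_le hab]
        apply ContinuousOn.neg
        apply ContinuousOn.div continuousOn_const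
        · exact ((continuousOn_const.sub continuousOn_id).pow 2)
        · intro t ht
          have h1t : t < 1 := (hsub ht).2
          exact pow_ne_zero 2 (ne_of_gt (by first | linarith | (simp only [id_eq]; linarith)))
    have hmono : ∫ t in a..b, d3 t ≤ ∫ t in a..b, -(K / (1 - t)^2) := by
      apply intervalIntegral.integral_mono_on hab
        ((hcd3.mono hsub01).intervalIntegrable_of_Icc hab)
      · apply ContinuousOn.intervalIntegrable
        rw [Set.uIcc_of_le hab]
        apply ContinuousOn.neg
        apply ContinuousOn.div continuousOn_const
        · exact ((continuousOn_const.sub continuousOn_id).pow 2)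
        · intro t ht
          have h1t : t < 1 := (hsub ht).2
          exact pow_ne_zero 2 (ne_of_gt (by first | linarith | (simp only [id_eq]; linarith)))
      · intro t ht
        exact hd3b t (hsub ht)
    rw [hftc, hftc2] at hmono
    have e1 : K * (1 - b)⁻¹ = K / (1 - b) := by rw [div_eq_mul_inv]
    have e2 : K * (1 - a)⁻¹ = K / (1 - a) := by rw [div_eq_mul_inv]
    rw [e1, e2] at hmono
    linarith
  -- first derivative bound
  set A := d2 a + K / (1 - a) with hAdef
  have hd1b : ∀ b ∈ Set.Ioo a 1, d1 b ≤ d1 a + A * (b - a)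
      + K * (Real.log (1 - b) - Real.log (1 - a)) := by
    intro b hb
    have hab : a ≤ b := hb.1.le
    have hsub : Set.Icc a b ⊆ Set.Ioo x₀ 1 := fun t ht =>
      ⟨lt_of_lt_of_le ha.1 ht.1, lt_of_le_of_lt ht.2 hb.2⟩
    have hsub01 : Set.Icc a b ⊆ Set.Ioo (0:ℝ) 1 := fun t ht =>
      ⟨by linarith [(hsub ht).1], (hsub ht).2⟩
    have hftc : ∫ t in a..b, d2 t = d1 b - d1 a := by
      apply intervalIntegral.integral_eq_sub_of_hasDerivAt
      · intro t ht
        rw [Set.uIcc_of_le hab] at ht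
        exact hd2at t (hsub01 ht)
      · exact ((hcd2.continuousOn).mono hsub01).intervalIntegrable_of_Icc hab
    have hftc2 : ∫ t in a..b, (A - K / (1 - t)) =
        (A * b + K * Real.log (1 - b)) - (A * a + K * Real.log (1 - a)) := by
      apply intervalIntegral.integral_eq_sub_of_hasDerivAt
      · intro t ht
        rw [Set.uIcc_of_le hab] at ht
        have hne : (1:ℝ) - t ≠ 0 := by
          have := (hsub ht).2; intro hc; linarith [hc]
        have h1 : HasDerivAt (fun t : ℝ => 1 - t) (-1) t := (hasDerivAt_id t).const_sub 1
        have h2 := (h1.log hne).const_mul K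
        have h3 := ((hasDerivAt_id t).const_mul A).add h2
        convert h3 using 1
        field_simp
        ring
        show A - K / (1 - t) = A * 1 + K * (-1 / (1 - t))
        ring
        funext y
        rfl
      · apply ContinuousOn.intervalIntegrable
        rw [Set.uIcc_of_le hab]
        apply ContinuousOn.sub continuousOn_const
        apply ContinuousOn.div continuousOn_const (continuousOn_const.sub continuousOn_id)
        intro t ht
        have h1t : t < 1 := (hsub ht).2
        exact ne_of_gt (by show (0:ℝ) < 1 - t; linarith)
    have hmono : ∫ t in a..b, d2 t ≤ ∫ t in a..b, (A - K / (1 - t)) := by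
      apply intervalIntegral.integral_mono_on hab
        (((hcd2.continuousOn).mono hsub01).intervalIntegrable_of_Icc hab)
      · apply ContinuousOn.intervalIntegrable
        rw [Set.uIcc_of_le hab]
        apply ContinuousOn.sub continuousOn_const
        apply ContinuousOn.div continuousOn_const (continuousOn_const.sub continuousOn_id)
        intro t ht
        have h1t : t < 1 := (hsub ht).2
        exact ne_of_gt (by show (0:ℝ) < 1 - t; linarith)
      · intro t ht
        rcases eq_or_lt_of_le ht.1 with h | h
        · rw [← h]; simp only [hAdef]; linarith
        · have := hd2b t ⟨h, lt_of_le_of_lt ht.2 hb.2⟩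
          simp only [hAdef]; linarith
    rw [hftc, hftc2] at hmono
    have hAe : A * (b - a) = A * b - A * a := by ring
    linarith
  -- contradiction
  obtain ⟨M, hM⟩ := (isCompact_Icc).exists_bound_of_continuousOn hcg1
  set B := M + d1 a + |A| - K * Real.log (1 - a) with hBdef
  set b := max ((a + 1) / 2) (1 - Real.exp (-(B + 1) / K)) with hbdef
  have hb : b ∈ Set.Ioo a 1 := by
    constructor
    · exact lt_of_lt_of_le (by linarith [ha.2] : a < (a+1)/2) (le_max_left _ _)
    · apply max_lt (by linarith [ha.2])
      have := Real.exp_pos (-(B + 1) / K)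
      linarith
  have hub : (0:ℝ) < 1 - b := by linarith [hb.2]
  have hlogb : Real.log (1 - b) ≤ -(B + 1) / K := by
    have h1 : 1 - b ≤ Real.exp (-(B + 1) / K) := by
      have := le_max_right ((a + 1) / 2) (1 - Real.exp (-(B + 1) / K))
      simp only [hbdef]
      linarith [this]
    calc Real.log (1 - b) ≤ Real.log (Real.exp (-(B + 1) / K)) :=
          Real.log_le_log hub h1
      _ = -(B + 1) / K := Real.log_exp _
  have hKb : K * Real.log (1 - b) ≤ -(B + 1) := by
    have := mul_le_mul_of_nonneg_left hlogb hK.le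
    rwa [mul_div_cancel₀ _ (ne_of_gt hK)] at this
  have hb01 : b ∈ Set.Icc (0:ℝ) 1 := ⟨by linarith [hb.1, ha.1], hb.2.le⟩
  have hMb : -M ≤ g1 b := by
    have := hM b hb01
    rw [Real.norm_eq_abs] at this
    linarith [abs_le.mp this |>.1]
  have hAb : A * (b - a) ≤ |A| := by
    calc A * (b - a) ≤ |A * (b - a)| := le_abs_self _
      _ = |A| * |b - a| := abs_mul _ _
      _ ≤ |A| * 1 := by
          apply mul_le_mul_of_nonneg_left _ (abs_nonneg _)
          rw [abs_of_nonneg (by linarith [hb.1] : (0:ℝ) ≤ b - a)]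
          linarith [hb.2, ha.1, hx₀pos]
      _ = |A| := mul_one _
  have hfin := hd1b b hb
  have hgb : g1 b = d1 b := hEq1 b ⟨by linarith [hb.1, ha01.1], hb.2⟩
  rw [← hgb] at hfin
  have : g1 b ≤ -M - 1 := by
    have h1 : K * (Real.log (1 - b) - Real.log (1 - a)) =
        K * Real.log (1 - b) - K * Real.log (1 - a) := by ring
    rw [h1] at hfin
    simp only [hBdef] at hKb
    linarith
  linarith
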